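/- Let E and F be Banach lattices with E having order continuous norm, and T : E → F a disjointness preserving linear operator vanishing on an order dense ideal of E. Then for every sequence (u_n) of pairwise disjoint positive elements of E, T(u_n) = 0 for all but finitely many n. -/

import Mathlib

variable {E F : Type*}
  [NormedAddCommGroup E] [Lattice E] [HasSolidNorm E] [IsOrderedAddMonoid E]
  [NormedSpace ℝ E] [CompleteSpace E]
  [NormedAddCommGroup F] [Lattice F] [HasSolidNorm F] [IsOrderedAddMonoid F]
  [NormedSpace ℝ F] [CompleteSpace F]

/-- An (order) ideal of a Banach lattice, as a set. -/
def IsIdealSet (I : Set E) : Prop :=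
  (0 : E) ∈ I ∧ (∀ x y : E, x ∈ I → y ∈ I → x + y ∈ I) ∧
    (∀ (c : ℝ) (x : E), x ∈ I → c • x ∈ I) ∧
    ∀ x y : E, |x| ≤ |y| → y ∈ I → x ∈ I

/-- A set is order dense if its disjoint complement is trivial. -/
def OrderDense (I : Set E) : Prop :=
  ∀ x : E, (∀ y ∈ I, |x| ⊓ |y| = 0) → x = 0

/-- `E` has order continuous norm: if a nonempty downward directed set has infimum `0`,
then the infimum of the norms of its elements is `0`. -/
def OrderContinuousNorm (E : Type*) [NormedAddCommGroup E] [Lattice E] [HasSolidNorm E]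
    [IsOrderedAddMonoid E] : Prop :=
  ∀ A : Set E, A.Nonempty → DirectedOn (· ≥ ·) A → IsGLB A 0 →
    ⨅ x : A, ‖(x : E)‖ = 0

section Helpers

variable {G : Type*} [NormedAddCommGroup G] [Lattice G] [HasSolidNorm G] [IsOrderedAddMonoid G]

lemma aux_disj_add {a b c : G} (ha : 0 ≤ a) (hb : 0 ≤ b) (hc : 0 ≤ c)
    (h1 : a ⊓ c = 0) (h2 : b ⊓ c = 0) : (a + b) ⊓ c = 0 := by
  have hle : (a + b) ⊓ c ≤ b := by
    have h' : (a + b) ⊓ c - b ≤ 0 := by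
      calc (a + b) ⊓ c - b = (a + b - b) ⊓ (c - b) := inf_sub _ _ _
        _ = a ⊓ (c - b) := by rw [add_sub_cancel_right]
        _ ≤ a ⊓ c := inf_le_inf_left a (sub_le_self c hb)
        _ = 0 := h1
    exact sub_nonpos.mp h'
  exact le_antisymm ((le_inf hle inf_le_right).trans h2.le)
    (le_inf (add_nonneg ha hb) hc)

lemma aux_disj_nsmul {a c : G} (ha : 0 ≤ a) (hc : 0 ≤ c) (h : a ⊓ c = 0) :
    ∀ n : ℕ, (n • a) ⊓ c = 0 := by
  intro n
  induction n with
  | zero => simpa using inf_eq_left.mpr hc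
  | succ n ih =>
      rw [succ_nsmul]
      exact aux_disj_add (nsmul_nonneg ha n) ha hc ih h

lemma aux_disj_sum {ι : Type*} (s : Finset ι) (f : ι → G) {c : G} (hc : 0 ≤ c)
    (hf : ∀ i, 0 ≤ f i) (hd : ∀ i, f i ⊓ c = 0) : (∑ i ∈ s, f i) ⊓ c = 0 := by
  classical
  induction s using Finset.induction with
  | empty => simpa using inf_eq_left.mpr hc
  | insert _ _ h ih =>
      rw [Finset.sum_insert h]
      exact aux_disj_add (hf _) (Finset.sum_nonneg fun i _ => hf i) hc (hd _) ih

lemma aux_disj_tsum {f : ℕ → G} {c : G} (hc : 0 ≤ c) (hf : ∀ i, 0 ≤ f i)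
    (hd : ∀ i, f i ⊓ c = 0) (hs : Summable f) : (∑' i, f i) ⊓ c = 0 := by
  have h1 : Filter.Tendsto (fun s : Finset ℕ => (∑ i ∈ s, f i) ⊓ c)
      Filter.atTop (nhds ((∑' i, f i) ⊓ c)) :=
    hs.hasSum.inf_nhds tendsto_const_nhds
  have h2 : (fun s : Finset ℕ => (∑ i ∈ s, f i) ⊓ c) = fun _ => (0 : G) := by
    funext s; exact aux_disj_sum s f hc hf hd
  rw [h2] at h1
  exact tendsto_nhds_unique h1 tendsto_const_nhds

lemma aux_abs_le_abs_add {a b : G} (h : |a| ⊓ |b| = 0) : |a| ≤ |a + b| := by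
  have htri : |a| ≤ |a + b| + |b| := by
    calc |a| = |a + b + -b| := by rw [add_neg_cancel_right]
      _ ≤ |a + b| + |-b| := abs_add_le _ _
      _ = |a + b| + |b| := by rw [abs_neg]
  have key : |a| ⊓ (|a + b| + |b|) ≤ |a + b| := by
    have h' : |a| ⊓ (|a + b| + |b|) - |a + b| ≤ 0 := by
      calc |a| ⊓ (|a + b| + |b|) - |a + b|
          = (|a| - |a + b|) ⊓ (|a + b| + |b| - |a + b|) := inf_sub _ _ _
        _ = (|a| - |a + b|) ⊓ |b| := by rw [add_sub_cancel_left]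
        _ ≤ |a| ⊓ |b| := inf_le_inf_right _ (sub_le_self _ (abs_nonneg _))
        _ = 0 := h
    exact sub_nonpos.mp h'
  calc |a| = |a| ⊓ (|a + b| + |b|) := (inf_eq_left.mpr htri).symm
    _ ≤ |a + b| := key

lemma aux_abs_nsmul_le (n : ℕ) (a : G) : |n • a| ≤ n • |a| := by
  induction n with
  | zero => simp
  | succ n ih =>
      rw [succ_nsmul, succ_nsmul]
      exact (abs_add_le _ _).trans (add_le_add ih le_rfl)

end Helpers

/-- Approximation from below by ideal elements. -/
lemma aux_approx (hocn : OrderContinuousNorm E) {I : Set E} (hI : IsIdealSet I)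
    (hIdense : OrderDense I) {x : E} (hx : 0 ≤ x) {ε : ℝ} (hε : 0 < ε) :
    ∃ y ∈ I, 0 ≤ y ∧ y ≤ x ∧ ‖x - y‖ < ε := by
  obtain ⟨hI0, hIadd, hIsmul, hIsolid⟩ := hI
  set A : Set E := {z | ∃ y, y ∈ I ∧ 0 ≤ y ∧ y ≤ x ∧ z = x - y} with hA
  have hxA : x ∈ A := ⟨0, hI0, le_refl 0, hx, by simp⟩
  have hne : A.Nonempty := ⟨x, hxA⟩
  have hdir : DirectedOn (· ≥ ·) A := by
    rintro _ ⟨y1, hy1I, hy1p, hy1x, rfl⟩ _ ⟨y2, hy2I, hy2p, hy2x, rfl⟩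
    have h0 : 0 ≤ y1 ⊔ y2 := le_sup_of_le_left hy1p
    have hmem : y1 ⊔ y2 ∈ I := by
      apply hIsolid _ (y1 + y2) _ (hIadd _ _ hy1I hy2I)
      rw [abs_of_nonneg h0]
      calc y1 ⊔ y2 ≤ y1 + y2 :=
            sup_le (le_add_of_nonneg_right hy2p) (le_add_of_nonneg_left hy1p)
        _ ≤ |y1 + y2| := le_abs_self _
    exact ⟨x - (y1 ⊔ y2), ⟨y1 ⊔ y2, hmem, h0, sup_le hy1x hy2x, rfl⟩,
      sub_le_sub_left le_sup_left x, sub_le_sub_left le_sup_right x⟩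
  have hglb : IsGLB A 0 := by
    constructor
    · rintro _ ⟨y, hyI, hyp, hyx, rfl⟩
      exact sub_nonneg.mpr hyx
    · intro w hw
      have hdense_arg : ∀ z ∈ I, (w ⊔ 0) ⊓ |z| = 0 := by
        intro z hz
        set d : E := (w ⊔ 0) ⊓ |z| with hd
        have hd0 : 0 ≤ d := le_inf le_sup_right (abs_nonneg z)
        have hdI : d ∈ I := hIsolid d z (by rw [abs_of_nonneg hd0]; exact inf_le_right) hz
        have hnd : ∀ n : ℕ, n • d ≤ x := by
          intro n
          induction n with
          | zero => simpa using hx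
          | succ n ih =>
              have hnI : n • d ∈ I := by
                have := hIsmul (n : ℝ) d hdI
                rwa [Nat.cast_smul_eq_nsmul] at this
              have hmem : x - n • d ∈ A := ⟨n • d, hnI, nsmul_nonneg hd0 n, ih, rfl⟩
              have hw1 : w ≤ x - n • d := hw hmem
              have hw2 : w ⊔ 0 ≤ x - n • d := sup_le hw1 (sub_nonneg.mpr ih)
              have hd2 : d ≤ x - n • d := le_trans inf_le_left hw2
              rw [succ_nsmul]
              exact add_le_of_le_sub_left hd2
        have hnorm : ∀ n : ℕ, (n : ℝ) * ‖d‖ ≤ ‖x‖ := by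
          intro n
          have h1 : |n • d| ≤ |x| := by
            rw [abs_of_nonneg (nsmul_nonneg hd0 n), abs_of_nonneg hx]
            exact hnd n
          have h2 : ‖n • d‖ ≤ ‖x‖ := HasSolidNorm.solid h1
          rwa [← Nat.cast_smul_eq_nsmul ℝ, norm_smul, Real.norm_natCast] at h2
        have hdnorm : ‖d‖ = 0 := by
          by_contra hne'
          have hpos : 0 < ‖d‖ := lt_of_le_of_ne (norm_nonneg d) (Ne.symm hne')
          obtain ⟨n, hn⟩ := exists_nat_gt (‖x‖ / ‖d‖)
          have := hnorm n
          rw [div_lt_iff₀ hpos] at hn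
          linarith
        exact norm_eq_zero.mp hdnorm
      have hw0 : w ⊔ 0 = 0 := by
        apply hIdense
        intro y hy
        rw [abs_of_nonneg (le_sup_right : (0:E) ≤ w ⊔ 0)]
        exact hdense_arg y hy
      exact le_sup_left.trans hw0.le
  have hinf := hocn A hne hdir hglb
  haveI : Nonempty A := hne.to_subtype
  have hlt : ⨅ z : A, ‖(z : E)‖ < ε := by rw [hinf]; exact hε
  obtain ⟨z, hz⟩ := exists_lt_of_ciInf_lt hlt
  obtain ⟨y, hyI, hyp, hyx, hzy⟩ := z.2
  refine ⟨y, hyI, hyp, hyx, ?_⟩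
  rw [← hzy]
  exact hz

/-- If `E` has order continuous norm and the disjointness preserving operator `T`
vanishes on an order dense ideal, then `T` kills all but finitely many members of any
pairwise disjoint sequence of positive elements. -/
theorem vanishing_on_order_dense_ideal_kills_disjoint_sequences
    (hocn : OrderContinuousNorm E)
    (T : E →ₗ[ℝ] F) (hdp : ∀ x y : E, |x| ⊓ |y| = 0 → |T x| ⊓ |T y| = 0)
    (I : Set E) (hI : IsIdealSet I) (hIdense : OrderDense I) (hTI : ∀ x ∈ I, T x = 0)
    (u : ℕ → E) (hpos : ∀ n, 0 ≤ u n)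
    (hdisj : Pairwise fun m n => |u m| ⊓ |u n| = 0) :
    {n : ℕ | T (u n) ≠ 0}.Finite := by
  by_contra hfin
  have hinf : {n : ℕ | T (u n) ≠ 0}.Infinite := hfin
  set e := hinf.natEmbedding with he
  set g : ℕ → ℕ := fun k => (e k : ℕ) with hg
  have hginj : Function.Injective g := fun a b hab =>
    e.injective (Subtype.ext hab)
  have hTv : ∀ k, T (u (g k)) ≠ 0 := fun k => (e k).2
  set N : ℕ → ℝ := fun k => ‖T (u (g k))‖ with hN
  have hNpos : ∀ k, 0 < N k := fun k =>
    norm_pos_iff.mpr (hTv k)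
  set m : ℕ → ℕ := fun k => ⌈((k : ℝ) + 1) / N k⌉₊ + 1 with hm
  have hmpos : ∀ k, 0 < m k := fun k => Nat.succ_pos _
  have hmN : ∀ k : ℕ, (k : ℝ) + 1 ≤ (m k : ℝ) * N k := by
    intro k
    have h1 : ((k : ℝ) + 1) / N k ≤ (m k : ℝ) := by
      calc ((k : ℝ) + 1) / N k ≤ ⌈((k : ℝ) + 1) / N k⌉₊ := Nat.le_ceil _
        _ ≤ (m k : ℝ) := by rw [hm]; push_cast; linarith
    calc (k : ℝ) + 1 = (((k : ℝ) + 1) / N k) * N k :=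
          (div_mul_cancel₀ _ (hNpos k).ne').symm
      _ ≤ (m k : ℝ) * N k := mul_le_mul_of_nonneg_right h1 (hNpos k).le
  -- choose approximations from the ideal
  have hchoice : ∀ k : ℕ, ∃ y ∈ I, 0 ≤ y ∧ y ≤ u (g k) ∧
      ‖u (g k) - y‖ < (1/2 : ℝ)^k / (m k) := by
    intro k
    exact aux_approx hocn hI hIdense (hpos (g k))
      (div_pos (pow_pos one_half_pos k) (by exact_mod_cast hmpos k))
  choose y hyI hyp hyx hynorm using hchoice
  set w : ℕ → E := fun k => (m k) • (u (g k) - y k) with hw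
  have hw0 : ∀ k, 0 ≤ w k := fun k => nsmul_nonneg (sub_nonneg.mpr (hyx k)) (m k)
  have hwnorm : ∀ k, ‖w k‖ ≤ (1/2 : ℝ)^k := by
    intro k
    have hwk : ‖w k‖ = (m k : ℝ) * ‖u (g k) - y k‖ := by
      show ‖(m k) • (u (g k) - y k)‖ = _
      rw [← Nat.cast_smul_eq_nsmul ℝ, norm_smul, Real.norm_natCast]
    calc ‖w k‖ = (m k : ℝ) * ‖u (g k) - y k‖ := hwk
      _ ≤ (m k : ℝ) * ((1/2 : ℝ)^k / (m k)) := by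
          exact mul_le_mul_of_nonneg_left (hynorm k).le (Nat.cast_nonneg _)
      _ = (1/2 : ℝ)^k := by
          field_simp
          exact mul_inv_cancel₀ (by exact_mod_cast (hmpos k).ne')
  have hsum : Summable w := by
    apply Summable.of_norm
    exact Summable.of_nonneg_of_le (fun k => norm_nonneg _) hwnorm summable_geometric_two
  set x : E := ∑' k, w k with hx
  -- key estimate
  have hkey : ∀ k : ℕ, (k : ℝ) + 1 ≤ ‖T x‖ := by
    intro k
    set r : E := ∑' j, (if j = k then 0 else w j) with hr
    have hsplit : x = w k + r := Summable.tsum_eq_add_tsum_ite hsum k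
    -- disjointness of the remainder from u (g k)
    have hfd : ∀ j : ℕ, (if j = k then (0:E) else w j) ⊓ u (g k) = 0 := by
      intro j
      by_cases hj : j = k
      · simp [hj, inf_eq_left.mpr (hpos (g k))]
      · simp only [if_neg hj]
        have hdu : u (g j) ⊓ u (g k) = 0 := by
          have h : |u (g j)| ⊓ |u (g k)| = 0 := hdisj (show g j ≠ g k from fun hc => hj (hginj hc))
          rwa [abs_of_nonneg (hpos (g j)), abs_of_nonneg (hpos (g k))] at h
        have hbase : (u (g j) - y j) ⊓ u (g k) = 0 := by
          apply le_antisymm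
          · calc (u (g j) - y j) ⊓ u (g k) ≤ u (g j) ⊓ u (g k) :=
                inf_le_inf_right _ (sub_le_self _ (hyp j))
              _ = 0 := hdu
          · exact le_inf (sub_nonneg.mpr (hyx j)) (hpos (g k))
        exact aux_disj_nsmul (sub_nonneg.mpr (hyx j)) (hpos (g k)) hbase (m j)
    have hf0 : ∀ j : ℕ, 0 ≤ (if j = k then (0:E) else w j) := by
      intro j; by_cases hj : j = k <;> simp [hj, hw0 j]
    have hfs : Summable (fun j => if j = k then (0:E) else w j) := by
      have h1 : Summable (fun j => if j = k then w j else 0) :=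
        summable_of_ne_finset_zero (s := {k}) (fun b hb => if_neg (by simpa using hb))
      have h2 : (fun j => if j = k then (0:E) else w j)
          = fun j => w j - (if j = k then w j else 0) := by
        funext j; by_cases hj : j = k <;> simp [hj]
      rw [h2]
      exact hsum.sub h1
    have hr0 : 0 ≤ r := tsum_nonneg hf0
    have hrd : r ⊓ u (g k) = 0 := aux_disj_tsum (hpos (g k)) hf0 hfd hfs
    -- apply T
    have hTw : T (w k) = (m k) • T (u (g k)) := by
      show T ((m k) • (u (g k) - y k)) = _
      rw [map_nsmul, map_sub, hTI (y k) (hyI k), sub_zero]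
    have hTx : T x = (m k) • T (u (g k)) + T r := by
      rw [hsplit, map_add, hTw]
    have hdr : |T r| ⊓ |T (u (g k))| = 0 := by
      apply hdp
      rw [abs_of_nonneg hr0, abs_of_nonneg (hpos (g k))]
      exact hrd
    have hdisjF : |(m k) • T (u (g k))| ⊓ |T r| = 0 := by
      apply le_antisymm
      · calc |(m k) • T (u (g k))| ⊓ |T r| ≤ ((m k) • |T (u (g k))|) ⊓ |T r| :=
            inf_le_inf_right _ (aux_abs_nsmul_le _ _)
          _ = 0 := aux_disj_nsmul (abs_nonneg _) (abs_nonneg _)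
              (by rw [inf_comm] at hdr; exact hdr) (m k)
      · exact le_inf (abs_nonneg _) (abs_nonneg _)
    have habs : |(m k) • T (u (g k))| ≤ |T x| := by
      rw [hTx]
      exact aux_abs_le_abs_add hdisjF
    have hnle : ‖(m k) • T (u (g k))‖ ≤ ‖T x‖ := HasSolidNorm.solid habs
    have heq : ‖(m k) • T (u (g k))‖ = (m k : ℝ) * N k := by
      rw [← Nat.cast_smul_eq_nsmul ℝ, norm_smul, Real.norm_natCast]
    calc (k : ℝ) + 1 ≤ (m k : ℝ) * N k := hmN k
      _ = ‖(m k) • T (u (g k))‖ := heq.symm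
      _ ≤ ‖T x‖ := hnle
  obtain ⟨n, hn⟩ := exists_nat_gt ‖T x‖
  have := hkey n
  linarith
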